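/- For every m ≥ 2 and all words s, ṡ ∈ {0,1}^m such that the cyclic binary word (s_1, …, s_m, ṡ_1, …, ṡ_m) of length 2m contains no two cyclically adjacent 1's, one has Σ_{i=1}^{m} [ A(flip_i s, ṡ) + A(s, flip_i ṡ) ] = 0. (Equivalently, ⟨c| H1 |Λ⟩ = 0 for every Rydberg-allowed configuration c of the periodic chain, so the volume-entangled state |Λ⟩ is an exact E = 0 eigenstate of the periodic PXP chain of length 2m.) -/

import Mathlib

open Matrix

/-- The blocked-antipodal MPS tensors of the volume-entangled state `|Λ⟩` of
the PXP chain: `M^{00} = (1/2)[[1,1],[1,1]]`, `M^{11} = [[0,0],[−2,0]]`,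
`M^{01} = M^{10} = 0`. -/
noncomputable def MLam : Fin 2 → Fin 2 → Matrix (Fin 2) (Fin 2) ℂ :=
  ![![(1 / 2 : ℂ) • !![1, 1; 1, 1], 0],
    ![0, !![0, 0; -2, 0]]]

/-- The blocked-antipodal amplitude
`A(s, ṡ) = Tr(M^{s_1 ṡ_1} ⋯ M^{s_m ṡ_m})`. -/
noncomputable def ampLam {m : ℕ} (s t : Fin m → Fin 2) : ℂ :=
  Matrix.trace (List.ofFn fun i : Fin m => MLam (s i) (t i)).prod

noncomputable def Pm : Matrix (Fin 2) (Fin 2) ℂ := (1 / 2 : ℂ) • !![1, 1; 1, 1]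
noncomputable def Qm : Matrix (Fin 2) (Fin 2) ℂ := !![0, 0; -2, 0]

lemma MLam00 : MLam 0 0 = Pm := rfl
lemma MLam11 : MLam 1 1 = Qm := rfl

lemma MLam_ne (a b : Fin 2) (h : a ≠ b) : MLam a b = 0 := by
  fin_cases a <;> fin_cases b <;> simp_all [MLam]

lemma PP : Pm * Pm = Pm := by
  ext i j
  fin_cases i <;> fin_cases j <;>
    simp [Pm, Matrix.mul_apply, Fin.sum_univ_two] <;> norm_num

lemma PQP : Pm * Qm * Pm = -Pm := by
  ext i j
  fin_cases i <;> fin_cases j <;>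
    simp [Pm, Qm, Matrix.mul_apply, Fin.sum_univ_two] <;> norm_num

lemma amp_zero {m : ℕ} (u v : Fin m → Fin 2) (j : Fin m) (h : u j ≠ v j) :
    ampLam u v = 0 := by
  unfold ampLam
  have hz : (0 : Matrix (Fin 2) (Fin 2) ℂ) ∈ List.ofFn fun i => MLam (u i) (v i) := by
    rw [List.mem_ofFn]
    exact ⟨j, (MLam_ne _ _ h).symm ▸ rfl⟩
  rw [List.prod_eq_zero hz, Matrix.trace_zero]

lemma trace_rotate_one (m : ℕ) (g : Fin (m + 1) → Matrix (Fin 2) (Fin 2) ℂ) :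
    Matrix.trace (List.ofFn g).prod
      = Matrix.trace (List.ofFn fun j => g (j + 1)).prod := by
  have h1 : List.ofFn g = g 0 :: List.ofFn fun i : Fin m => g i.succ := List.ofFn_succ (f := g)
  have heq : (fun i : Fin m => g (i.castSucc + 1)) = fun i : Fin m => g i.succ := by
    funext i
    rw [show (i.castSucc + 1 : Fin (m+1)) = i.succ from by
      ext; simp [Fin.add_def, Nat.mod_eq_of_lt (by omega : (i : ℕ) + 1 < m + 1)]]
  have heq2 : (Fin.last m) + 1 = 0 := by
    ext; simp [Fin.add_def]
  have h2 : List.ofFn (fun j : Fin (m+1) => g (j + 1))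
      = (List.ofFn fun i : Fin m => g i.succ).concat (g 0) := by
    rw [List.ofFn_succ' (fun j : Fin (m+1) => g (j + 1)), heq, heq2]
  rw [h1, h2, List.concat_eq_append, List.prod_cons, List.prod_append, List.prod_singleton,
    Matrix.trace_mul_comm]

open Fin.NatCast Fin.CommRing in
lemma trace_rotate (m : ℕ) (g : Fin (m + 1) → Matrix (Fin 2) (Fin 2) ℂ) (k : ℕ) :
    Matrix.trace (List.ofFn g).prod
      = Matrix.trace (List.ofFn fun j => g (j + (k : Fin (m+1)))).prod := by
  induction k with
  | zero => simp
  | succ n ih =>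
      rw [ih, trace_rotate_one m (fun j => g (j + (n : Fin (m+1))))]
      have heq : (fun j : Fin (m+1) => g (j + 1 + (n : Fin (m+1))))
          = fun j : Fin (m+1) => g (j + ((n+1 : ℕ) : Fin (m+1))) := by
        funext j
        congr 1
        push_cast
        ring
      rw [heq]

lemma cancel0 (k : ℕ) (v : Fin (k + 2) → Fin 2) (h1 : v 1 = 0)
    (h2 : v (Fin.last (k + 1)) = 0) :
    Matrix.trace (List.ofFn fun j =>
        MLam (Function.update v 0 0 j) (Function.update v 0 0 j)).prod
    + Matrix.trace (List.ofFn fun j =>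
        MLam (Function.update v 0 1 j) (Function.update v 0 1 j)).prod = 0 := by
  set T : List (Matrix (Fin 2) (Fin 2) ℂ) :=
    List.ofFn fun i : Fin (k+1) => MLam (v i.succ) (v i.succ) with hT
  have hsplit : ∀ a : Fin 2,
      (List.ofFn fun j => MLam (Function.update v 0 a j) (Function.update v 0 a j))
        = MLam a a :: T := by
    intro a
    rw [List.ofFn_succ]
    have he : (fun i : Fin (k+1) =>
        MLam (Function.update v 0 a i.succ) (Function.update v 0 a i.succ))
        = fun i : Fin (k+1) => MLam (v i.succ) (v i.succ) := by
      funext i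
      rw [Function.update_of_ne (Fin.succ_ne_zero i)]
    rw [he, Function.update_self]
  have hfirst : T = Pm :: List.ofFn fun i : Fin k => MLam (v i.succ.succ) (v i.succ.succ) := by
    rw [hT, List.ofFn_succ]
    rw [show ((0 : Fin (k+1)).succ : Fin (k+2)) = 1 from rfl, h1, MLam00]
  have hlast : T = (List.ofFn fun i : Fin k =>
      MLam (v i.castSucc.succ) (v i.castSucc.succ)).concat Pm := by
    rw [hT, List.ofFn_succ']
    rw [show (Fin.last k).succ = Fin.last (k+1) from rfl, h2, MLam00]
  set R := T.prod with hR
  have hRP : R * Pm = R := by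
    rw [hR, hlast, List.concat_eq_append, List.prod_append, List.prod_singleton,
      mul_assoc, PP]
  set X := (List.ofFn fun i : Fin k => MLam (v i.succ.succ) (v i.succ.succ)).prod with hX
  have hPR : R = Pm * X := by rw [hR, hfirst, List.prod_cons]
  rw [hsplit 0, hsplit 1, List.prod_cons, List.prod_cons, MLam00, MLam11]
  calc Matrix.trace (Pm * R) + Matrix.trace (Qm * R)
      = Matrix.trace ((Pm * R) * Pm) + Matrix.trace ((Qm * R) * Pm) := by
        rw [mul_assoc, mul_assoc, hRP]
    _ = Matrix.trace (Pm * (Pm * R)) + Matrix.trace (Pm * (Qm * R)) := by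
        rw [Matrix.trace_mul_comm, Matrix.trace_mul_comm (Qm * R)]
    _ = Matrix.trace ((Pm * Pm * Pm) * X) + Matrix.trace ((Pm * Qm * Pm) * X) := by
        rw [hPR, ← mul_assoc, ← mul_assoc, ← mul_assoc, ← mul_assoc]
    _ = 0 := by rw [PP, PP, PQP, Matrix.neg_mul, Matrix.trace_neg, add_neg_cancel]

open Fin.NatCast Fin.CommRing in
lemma cancel_pair (k : ℕ) (c : Fin (k + 2) → Fin 2) (i0 : Fin (k + 2))
    (h1 : c (i0 + 1) = 0) (h2 : c (i0 - 1) = 0) :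
    ampLam (Function.update c i0 0) (Function.update c i0 0)
    + ampLam (Function.update c i0 1) (Function.update c i0 1) = 0 := by
  unfold ampLam
  have hrot : ∀ a : Fin 2,
      Matrix.trace (List.ofFn fun j =>
        MLam (Function.update c i0 a j) (Function.update c i0 a j)).prod
      = Matrix.trace (List.ofFn fun j =>
        MLam (Function.update (fun j' => c (j' + i0)) 0 a j)
             (Function.update (fun j' => c (j' + i0)) 0 a j)).prod := by
    intro a
    rw [trace_rotate (k+1) _ (i0 : ℕ)]
    have he : (fun j : Fin (k+2) => MLam (Function.update c i0 a (j + (((i0:ℕ) : Fin (k+2)))))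
          (Function.update c i0 a (j + (((i0:ℕ) : Fin (k+2))))))
        = fun j => MLam (Function.update (fun j' => c (j' + i0)) 0 a j)
             (Function.update (fun j' => c (j' + i0)) 0 a j) := by
      funext j
      have hji : Function.update c i0 a (j + (((i0:ℕ) : Fin (k+2))))
          = Function.update (fun j' => c (j' + i0)) 0 a j := by
        rw [Fin.cast_val_eq_self]
        by_cases hj : j = 0
        · subst hj; rw [zero_add, Function.update_self, Function.update_self]
        · rw [Function.update_of_ne hj, Function.update_of_ne (fun hcon => hj
            (add_right_cancel (hcon.trans (zero_add i0).symm)))]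
      rw [hji]
    rw [he]
  rw [hrot 0, hrot 1]
  apply cancel0
  · show c (1 + i0) = 0
    rw [add_comm]; exact h1
  · show c (Fin.last (k+1) + i0) = 0
    rw [show (Fin.last (k+1) : Fin (k+2)) = -1 by simp [Fin.ext_iff, Fin.neg_def]]
    rw [show (-1 : Fin (k+2)) + i0 = i0 - 1 by ring]
    exact h2

lemma fin2_ne (a b : Fin 2) (h : a ≠ b) : (a = 1 ∧ b = 0) ∨ (a = 0 ∧ b = 1) := by
  fin_cases a <;> fin_cases b <;> simp_all

lemma fin2_not_one (a : Fin 2) (h : a ≠ 1) : a = 0 := by fin_cases a <;> simp_all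

lemma main_pair (k : ℕ) (s t : Fin (k + 2) → Fin 2)
    (hs : ∀ i : ℕ, ∀ h1 : i < k + 2, ∀ h2 : i + 1 < k + 2,
      ¬(s ⟨i, h1⟩ = 1 ∧ s ⟨i + 1, h2⟩ = 1))
    (hst : ¬(s ⟨k + 1, by omega⟩ = 1 ∧ t ⟨0, by omega⟩ = 1))
    (hts : ¬(t ⟨k + 1, by omega⟩ = 1 ∧ s ⟨0, by omega⟩ = 1))
    (j0 : Fin (k + 2)) (hs1 : s j0 = 1) (ht0 : t j0 = 0)
    (hagree : ∀ j, j ≠ j0 → s j = t j) :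
    ampLam s s + ampLam t t = 0 := by
  -- neighbor facts
  have hone : (1 : Fin (k+2)) ≠ 0 := by
    intro h
    have := congrArg Fin.val h
    rw [Fin.val_one, Fin.val_zero] at this
    exact one_ne_zero this
  have hne1 : j0 + 1 ≠ j0 := fun h => hone (add_left_cancel (h.trans (add_zero j0).symm))
  have hne2 : j0 - 1 ≠ j0 := fun h => hone (sub_eq_self.mp h)
  have h1 : t (j0 + 1) = 0 := by
    by_cases hlt : (j0 : ℕ) + 1 < k + 2
    · have heq : j0 + 1 = ⟨(j0 : ℕ) + 1, hlt⟩ := by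
        ext; rw [Fin.add_def]; simp [Nat.mod_eq_of_lt hlt]
      have hcon := hs (j0 : ℕ) j0.isLt hlt
      rw [Fin.eta] at hcon
      have : s ⟨(j0 : ℕ) + 1, hlt⟩ = 0 :=
        fin2_not_one _ (fun hone => hcon ⟨hs1, hone⟩)
      rw [heq, ← hagree _ (heq ▸ hne1)]
      exact this
    · have hval : (j0 : ℕ) = k + 1 := by have := j0.isLt; omega
      have heq : j0 + 1 = ⟨0, by omega⟩ := by
        ext; rw [Fin.add_def]; simp [hval]
      have hj0 : j0 = ⟨k + 1, by omega⟩ := by ext; simp [hval]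
      have : t ⟨0, by omega⟩ = 0 :=
        fin2_not_one _ (fun hone => hst ⟨hj0 ▸ hs1, hone⟩)
      rw [heq]; exact this
  have h2 : t (j0 - 1) = 0 := by
    by_cases h0 : (j0 : ℕ) = 0
    · have hj0 : j0 = ⟨0, by omega⟩ := by ext; simp [h0]
      have heq : j0 - 1 = ⟨k + 1, by omega⟩ := by
        ext; rw [Fin.sub_def]; simp [h0]
      have : t ⟨k + 1, by omega⟩ = 0 :=
        fin2_not_one _ (fun hone => hts ⟨hone, hj0 ▸ hs1⟩)
      rw [heq]; exact this
    · have heq : j0 - 1 = ⟨(j0 : ℕ) - 1, by omega⟩ := by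
        ext; rw [Fin.sub_def]
        show (k + 2 - 1 + (j0:ℕ)) % (k+2) = (j0:ℕ) - 1
        have hj := j0.isLt
        have he : k + 2 - 1 + (j0:ℕ) = (k+2) + ((j0:ℕ) - 1) := by omega
        rw [he, Nat.add_mod_left, Nat.mod_eq_of_lt (by omega)]
      have hstep : ((j0 : ℕ) - 1) + 1 < k + 2 := by have := j0.isLt; omega
      have hcon := hs ((j0 : ℕ) - 1) (by omega) hstep
      have hj0 : (⟨(j0 : ℕ) - 1 + 1, hstep⟩ : Fin (k+2)) = j0 := by ext; simp; omega
      rw [hj0] at hcon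
      have : s ⟨(j0 : ℕ) - 1, by omega⟩ = 0 :=
        fin2_not_one _ (fun hone => hcon ⟨hone, hs1⟩)
      rw [heq, ← hagree _ (heq ▸ hne2)]
      exact this
  -- s and t as updates of t
  have hts' : t = Function.update t j0 0 := by rw [← ht0, Function.update_eq_self]
  have hss : s = Function.update t j0 1 := by
    funext j
    by_cases hj : j = j0
    · subst hj; rw [Function.update_self, hs1]
    · rw [Function.update_of_ne hj, hagree _ hj]
  calc ampLam s s + ampLam t t = ampLam t t + ampLam s s := add_comm _ _
    _ = ampLam (Function.update t j0 0) (Function.update t j0 0)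
        + ampLam (Function.update t j0 1) (Function.update t j0 1) := by
        rw [← hts', ← hss]
    _ = 0 := cancel_pair k t j0 h1 h2

lemma fin2_flip_ne (a : Fin 2) : 1 - a ≠ a := by fin_cases a <;> simp

lemma fin2_flip_eq (a b : Fin 2) (h : a ≠ b) : b = 1 - a := by
  fin_cases a <;> fin_cases b <;> simp_all

/-- for every `m ≥ 2` and all words `s, ṡ` such that the cyclic
configuration `(s_1, …, s_m, ṡ_1, …, ṡ_m)` has no two cyclically adjacent 1's,
the sum of all single-flip amplitudes of `|Λ⟩` vanishes; hence `|Λ⟩` is an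
exact `E = 0` eigenstate of the periodic PXP chain of length `2m`. -/
theorem Lambda_flip_sum_eq_zero
    (m : ℕ) (hm : 2 ≤ m) (s t : Fin m → Fin 2)
    (hs : ∀ i : ℕ, ∀ h1 : i < m, ∀ h2 : i + 1 < m,
      ¬(s ⟨i, h1⟩ = 1 ∧ s ⟨i + 1, h2⟩ = 1))
    (ht : ∀ i : ℕ, ∀ h1 : i < m, ∀ h2 : i + 1 < m,
      ¬(t ⟨i, h1⟩ = 1 ∧ t ⟨i + 1, h2⟩ = 1))
    (hst : ¬(s ⟨m - 1, by omega⟩ = 1 ∧ t ⟨0, by omega⟩ = 1))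
    (hts : ¬(t ⟨m - 1, by omega⟩ = 1 ∧ s ⟨0, by omega⟩ = 1)) :
    ∑ i : Fin m,
      (ampLam (Function.update s i (1 - s i)) t +
       ampLam s (Function.update t i (1 - t i))) = 0 := by
  obtain ⟨k, rfl⟩ : ∃ k, m = k + 2 := ⟨m - 2, by omega⟩
  by_cases hall : ∀ j, s j = t j
  · apply Finset.sum_eq_zero
    intro i _
    have e1 : ampLam (Function.update s i (1 - s i)) t = 0 := by
      apply amp_zero _ _ i
      rw [Function.update_self, ← hall i]
      exact fin2_flip_ne _
    have e2 : ampLam s (Function.update t i (1 - t i)) = 0 := by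
      apply amp_zero _ _ i
      rw [Function.update_self, hall i]
      exact (fin2_flip_ne _).symm
    rw [e1, e2, add_zero]
  · push_neg at hall
    obtain ⟨j0, hj0⟩ := hall
    by_cases huniq : ∀ j, s j ≠ t j → j = j0
    · -- exactly one difference, at j0
      rw [Finset.sum_eq_single j0]
      · -- the term at j0
        have hut : Function.update s j0 (1 - s j0) = t := by
          funext j
          by_cases hj : j = j0
          · subst hj
            rw [Function.update_self, ← fin2_flip_eq _ _ hj0]
          · rw [Function.update_of_ne hj]
            by_contra hne
            exact hj (huniq j hne)
        have hus : Function.update t j0 (1 - t j0) = s := by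
          funext j
          by_cases hj : j = j0
          · subst hj
            rw [Function.update_self, ← fin2_flip_eq _ _ (Ne.symm hj0)]
          · rw [Function.update_of_ne hj]
            by_contra hne
            exact hj (huniq j (Ne.symm hne))
        rw [hut, hus]
        rcases fin2_ne _ _ hj0 with ⟨hs1, ht0⟩ | ⟨hs0, ht1⟩
        · have hagree : ∀ j, j ≠ j0 → s j = t j := by
            intro j hj
            by_contra hne
            exact hj (huniq j hne)
          rw [add_comm]
          exact main_pair k s t hs hst hts j0 hs1 ht0 hagree
        · have hagree : ∀ j, j ≠ j0 → t j = s j := by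
            intro j hj
            by_contra hne
            exact hj (huniq j (fun h => hne h.symm))
          exact main_pair k t s ht hts hst j0 ht1 hs0 hagree
      · -- other terms vanish
        intro i _ hi
        have e1 : ampLam (Function.update s i (1 - s i)) t = 0 := by
          apply amp_zero _ _ j0
          rw [Function.update_of_ne (Ne.symm hi)]
          exact hj0
        have e2 : ampLam s (Function.update t i (1 - t i)) = 0 := by
          apply amp_zero _ _ j0
          rw [Function.update_of_ne (Ne.symm hi)]
          exact hj0
        rw [e1, e2, add_zero]
      · intro h
        exact absurd (Finset.mem_univ j0) h
    · -- at least two differences: everything vanishes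
      push_neg at huniq
      obtain ⟨j1, hj1d, hj1ne⟩ := huniq
      apply Finset.sum_eq_zero
      intro i _
      obtain ⟨j, hji, hjd⟩ : ∃ j, j ≠ i ∧ s j ≠ t j := by
        by_cases h : i = j0
        · exact ⟨j1, by rw [← h] at hj1ne; exact hj1ne, hj1d⟩
        · exact ⟨j0, fun hc => h hc.symm, hj0⟩
      have e1 : ampLam (Function.update s i (1 - s i)) t = 0 := by
        apply amp_zero _ _ j
        rw [Function.update_of_ne hji]
        exact hjd
      have e2 : ampLam s (Function.update t i (1 - t i)) = 0 := by
        apply amp_zero _ _ j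
        rw [Function.update_of_ne hji]
        exact hjd
      rw [e1, e2, add_zero]
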